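/- Let ρ be a density operator on a finite-dimensional Hilbert space H_A ⊗ H_B ⊗ H_C and suppose that for all Hermitian operators A_i, B_j, C_k (i,j,k ∈ {0,1}) with operator norm at most 1 we have |tr((A_i ⊗ B_j ⊗ C_k)ρ) − tr((A_i ⊗ I ⊗ I)ρ)·tr((I ⊗ B_j ⊗ C_k)ρ)| ≤ δ. Then the Svetlichny quantity S = ⟨A₀B₀C₀⟩ + ⟨A₁B₀C₀⟩ + ⟨A₀B₁C₀⟩ + ⟨A₀B₀C₁⟩ − ⟨A₀B₁C₁⟩ − ⟨A₁B₁C₀⟩ − ⟨A₁B₀C₁⟩ − ⟨A₁B₁C₁⟩ satisfies S ≤ 4 + 8δ, where ⟨A_iB_jC_k⟩ = tr((A_i ⊗ B_j ⊗ C_k)ρ). -/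

import Mathlib

open scoped Matrix.Norms.L2Operator Kronecker ComplexOrder

open Matrix

section Aux

variable {l m n p : Type*} [Fintype l] [Fintype m] [Fintype n] [Fintype p]

private lemma kron_conjT (A : Matrix l m ℂ) (B : Matrix n p ℂ) : (A ⊗ₖ B)ᴴ = Aᴴ ⊗ₖ Bᴴ := by
  ext ⟨i, j⟩ ⟨k, l⟩
  simp [Matrix.conjTranspose_apply, Matrix.kroneckerMap_apply, star_mul']

private lemma sub_kron (A₁ A₂ : Matrix l m ℂ) (B : Matrix n p ℂ) :
    (A₁ - A₂) ⊗ₖ B = A₁ ⊗ₖ B - A₂ ⊗ₖ B := by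
  ext ⟨i, j⟩ ⟨k, l⟩
  simp [Matrix.kroneckerMap_apply, sub_mul]

private lemma kron_sub (A : Matrix l m ℂ) (B₁ B₂ : Matrix n p ℂ) :
    A ⊗ₖ (B₁ - B₂) = A ⊗ₖ B₁ - A ⊗ₖ B₂ := by
  ext ⟨i, j⟩ ⟨k, l⟩
  simp [Matrix.kroneckerMap_apply, mul_sub]

private lemma kron_psd {P : Matrix m m ℂ} {Q : Matrix n n ℂ} (hP : P.PosSemidef)
    (hQ : Q.PosSemidef) : (P ⊗ₖ Q).PosSemidef := by
  exact hP.kronecker hQ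

private lemma trace_re_nonneg' [DecidableEq n] {N : Matrix n n ℂ} (hN : N.PosSemidef) :
    0 ≤ (N.trace).re := by
  rw [Matrix.trace, Complex.re_sum]
  refine Finset.sum_nonneg fun i _ => ?_
  have h := hN.dotProduct_mulVec_nonneg (Pi.single i 1)
  have he : dotProduct (star (Pi.single i (1:ℂ))) (N *ᵥ Pi.single i 1) = N i i := by
    simp [Matrix.mulVec_single, dotProduct, Pi.single_apply]
  rw [he] at h
  exact (Complex.le_def.mp h).1

private lemma trace_mul_re_nonneg [DecidableEq n] {P Q : Matrix n n ℂ} (hP : P.PosSemidef)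
    (hQ : Q.PosSemidef) : 0 ≤ ((P * Q).trace).re := by
  obtain ⟨B, rfl⟩ : ∃ B : Matrix n n ℂ, P = Bᴴ * B := by
    open scoped MatrixOrder in
    obtain ⟨B, hB⟩ := CStarAlgebra.nonneg_iff_eq_star_mul_self.mp hP.nonneg
    exact ⟨B, hB⟩
  rw [Matrix.mul_assoc, Matrix.trace_mul_comm]
  exact trace_re_nonneg' ((hQ.mul_mul_conjTranspose_same B))

private lemma herm_pm {n : Type*} [Fintype n] [DecidableEq n] {M : Matrix n n ℂ}
    (hM : M.IsHermitian) (hn : ‖M‖ ≤ 1) : (1 - M).PosSemidef ∧ (1 + M).PosSemidef := by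
  have hS : M.toEuclideanLin.IsSymmetric := Matrix.isHermitian_iff_isSymmetric.mp hM
  have key : ∀ x : n → ℂ, ∃ r : ℝ, |r| ≤ Complex.re (dotProduct (star x) x) ∧
      dotProduct (star x) (M *ᵥ x) = (r : ℂ) := by
    intro x
    set y : EuclideanSpace ℂ n := (WithLp.equiv 2 _).symm x with hy
    set z : EuclideanSpace ℂ n := (WithLp.equiv 2 _).symm (M *ᵥ x) with hz
    have h1 : dotProduct (star x) (M *ᵥ x) = inner ℂ y z :=
      (by rw [dotProduct_comm]; rfl)
    have h0 : dotProduct (star x) x = inner ℂ y y :=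
      (by rw [dotProduct_comm]; rfl)
    have hzy : z = M.toEuclideanLin y := by
      rfl
    have hreal : (inner ℂ y z : ℂ) = ((inner ℂ y z : ℂ).re : ℂ) := by
      refine (Complex.conj_eq_iff_re.mp ?_).symm
      calc (starRingEnd ℂ) (inner ℂ y z) = inner ℂ z y := by rw [inner_conj_symm]
        _ = inner ℂ ((toEuclideanLin M) y) y := by rw [hzy]
        _ = inner ℂ y ((toEuclideanLin M) y) := hS y y
        _ = inner ℂ y z := by rw [hzy]
    refine ⟨(inner ℂ y z : ℂ).re, ?_, by rw [h1]; exact hreal⟩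
    have hb : |(inner ℂ y z : ℂ).re| ≤ ‖y‖ * ‖z‖ := by
      calc |(inner ℂ y z : ℂ).re| ≤ ‖inner ℂ y z‖ := Complex.abs_re_le_norm _
        _ ≤ ‖y‖ * ‖z‖ := by simpa using norm_inner_le_norm (𝕜 := ℂ) y z
    have hzn : ‖z‖ ≤ ‖M‖ * ‖y‖ := M.l2_opNorm_mulVec y
    have hyy : Complex.re (dotProduct (star x) x) = ‖y‖ ^ 2 := by
      rw [h0]
      exact_mod_cast inner_self_eq_norm_sq (𝕜 := ℂ) y
    rw [hyy]
    nlinarith [norm_nonneg y, norm_nonneg z, mul_nonneg (norm_nonneg y) (norm_nonneg z)]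
  have him : ∀ x : n → ℂ, (dotProduct (star x) x).im = 0 := fun x =>
    ((Complex.le_def.mp (dotProduct_star_self_nonneg x)).2).symm
  constructor
  · refine .of_dotProduct_mulVec_nonneg (Matrix.isHermitian_one.sub hM) fun x => ?_
    obtain ⟨r, hr, heq⟩ := key x
    rw [Matrix.sub_mulVec, dotProduct_sub, Matrix.one_mulVec, heq, Complex.le_def]
    constructor
    · simp only [Complex.sub_re, Complex.ofReal_re, Complex.zero_re]
      linarith [(abs_le.mp hr).2]
    · simp [him x]
  · refine .of_dotProduct_mulVec_nonneg (Matrix.isHermitian_one.add hM) fun x => ?_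
    obtain ⟨r, hr, heq⟩ := key x
    rw [Matrix.add_mulVec, dotProduct_add, Matrix.one_mulVec, heq, Complex.le_def]
    constructor
    · simp only [Complex.add_re, Complex.ofReal_re, Complex.zero_re]
      linarith [(abs_le.mp hr).1]
    · simp [him x]

private lemma re_trace_bound {n : Type*} [Fintype n] [DecidableEq n]
    {ρ M P1 P2 Q1 Q2 : Matrix n n ℂ} (hρ : ρ.PosSemidef) (hρtr : ρ.trace = 1)
    (hP1 : P1.PosSemidef) (hP2 : P2.PosSemidef) (hQ1 : Q1.PosSemidef) (hQ2 : Q2.PosSemidef)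
    (hsub : P1 + P2 = (1 - M) + (1 - M)) (hadd : Q1 + Q2 = (1 + M) + (1 + M)) :
    |((M * ρ).trace).re| ≤ 1 := by
  have t1 : 0 ≤ (((P1 + P2) * ρ).trace).re := by
    rw [Matrix.add_mul, Matrix.trace_add, Complex.add_re]
    exact add_nonneg (trace_mul_re_nonneg hP1 hρ) (trace_mul_re_nonneg hP2 hρ)
  have t2 : 0 ≤ (((Q1 + Q2) * ρ).trace).re := by
    rw [Matrix.add_mul, Matrix.trace_add, Complex.add_re]
    exact add_nonneg (trace_mul_re_nonneg hQ1 hρ) (trace_mul_re_nonneg hQ2 hρ)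
  have e1 : (((P1 + P2) * ρ).trace) = 2 - 2 * ((M * ρ).trace) := by
    rw [hsub, Matrix.add_mul, Matrix.sub_mul, Matrix.one_mul, Matrix.trace_add,
      Matrix.trace_sub, hρtr]
    ring
  have e2 : (((Q1 + Q2) * ρ).trace) = 2 + 2 * ((M * ρ).trace) := by
    rw [hadd, Matrix.add_mul, Matrix.add_mul, Matrix.one_mul, Matrix.trace_add,
      Matrix.trace_add, hρtr]
    ring
  rw [e1] at t1
  rw [e2] at t2
  rw [abs_le]
  constructor
  · have := t2
    norm_num [Complex.add_re, Complex.mul_re] at this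
    linarith
  · have := t1
    norm_num [Complex.sub_re, Complex.mul_re] at this
    linarith

end Aux

/-- If every triple of Hermitian norm-one-bounded observables satisfies the clustering
bound `|⟨A⊗B⊗C⟩ − ⟨A⟩⟨B⊗C⟩| ≤ δ` on the state `ρ`, then the Svetlichny quantity
satisfies `S ≤ 4 + 8δ`. -/
theorem stmt_0 {dA dB dC : Type*} [Fintype dA] [Fintype dB] [Fintype dC]
    [DecidableEq dA] [DecidableEq dB] [DecidableEq dC]
    (ρ : Matrix ((dA × dB) × dC) ((dA × dB) × dC) ℂ)
    (hρ : ρ.PosSemidef) (hρtr : ρ.trace = 1) (δ : ℝ)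
    (hcl : ∀ (A : Matrix dA dA ℂ) (B : Matrix dB dB ℂ) (C : Matrix dC dC ℂ),
      A.IsHermitian → B.IsHermitian → C.IsHermitian →
      ‖A‖ ≤ 1 → ‖B‖ ≤ 1 → ‖C‖ ≤ 1 →
      |(((A ⊗ₖ B ⊗ₖ C) * ρ).trace).re -
        (((A ⊗ₖ (1 : Matrix dB dB ℂ) ⊗ₖ (1 : Matrix dC dC ℂ)) * ρ).trace).re *
          ((((1 : Matrix dA dA ℂ) ⊗ₖ B ⊗ₖ C) * ρ).trace).re| ≤ δ)
    (A : Fin 2 → Matrix dA dA ℂ) (B : Fin 2 → Matrix dB dB ℂ) (C : Fin 2 → Matrix dC dC ℂ)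
    (hA : ∀ i, (A i).IsHermitian) (hB : ∀ j, (B j).IsHermitian) (hC : ∀ k, (C k).IsHermitian)
    (hAn : ∀ i, ‖A i‖ ≤ 1) (hBn : ∀ j, ‖B j‖ ≤ 1) (hCn : ∀ k, ‖C k‖ ≤ 1) :
    (((A 0 ⊗ₖ B 0 ⊗ₖ C 0) * ρ).trace).re + (((A 1 ⊗ₖ B 0 ⊗ₖ C 0) * ρ).trace).re +
      (((A 0 ⊗ₖ B 1 ⊗ₖ C 0) * ρ).trace).re + (((A 0 ⊗ₖ B 0 ⊗ₖ C 1) * ρ).trace).re -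
      (((A 0 ⊗ₖ B 1 ⊗ₖ C 1) * ρ).trace).re - (((A 1 ⊗ₖ B 1 ⊗ₖ C 0) * ρ).trace).re -
      (((A 1 ⊗ₖ B 0 ⊗ₖ C 1) * ρ).trace).re - (((A 1 ⊗ₖ B 1 ⊗ₖ C 1) * ρ).trace).re ≤
    4 + 8 * δ := by

  -- one-body expectation values are bounded by 1
  have ha : ∀ i : Fin 2,
      |(((A i ⊗ₖ (1 : Matrix dB dB ℂ) ⊗ₖ (1 : Matrix dC dC ℂ)) * ρ).trace).re| ≤ 1 := by
    intro i
    have h := herm_pm (hA i) (hAn i)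
    refine re_trace_bound hρ hρtr
      (P1 := ((1 - A i) ⊗ₖ 1) ⊗ₖ 1) (P2 := ((1 - A i) ⊗ₖ 1) ⊗ₖ 1)
      (Q1 := ((1 + A i) ⊗ₖ 1) ⊗ₖ 1) (Q2 := ((1 + A i) ⊗ₖ 1) ⊗ₖ 1)
      (kron_psd (kron_psd h.1 Matrix.PosSemidef.one) Matrix.PosSemidef.one)
      (kron_psd (kron_psd h.1 Matrix.PosSemidef.one) Matrix.PosSemidef.one)
      (kron_psd (kron_psd h.2 Matrix.PosSemidef.one) Matrix.PosSemidef.one)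
      (kron_psd (kron_psd h.2 Matrix.PosSemidef.one) Matrix.PosSemidef.one)
      ?_ ?_
    · simp only [sub_kron, Matrix.add_kronecker, Matrix.one_kronecker_one]
    · simp only [Matrix.add_kronecker, Matrix.one_kronecker_one]
  -- two-body expectation values are bounded by 1
  have hb : ∀ j k : Fin 2,
      |((((1 : Matrix dA dA ℂ) ⊗ₖ B j ⊗ₖ C k) * ρ).trace).re| ≤ 1 := by
    intro j k
    have hb' := herm_pm (hB j) (hBn j)
    have hc' := herm_pm (hC k) (hCn k)
    refine re_trace_bound hρ hρtr
      (P1 := (1 ⊗ₖ (1 - B j)) ⊗ₖ (1 + C k)) (P2 := (1 ⊗ₖ (1 + B j)) ⊗ₖ (1 - C k))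
      (Q1 := (1 ⊗ₖ (1 - B j)) ⊗ₖ (1 - C k)) (Q2 := (1 ⊗ₖ (1 + B j)) ⊗ₖ (1 + C k))
      (kron_psd (kron_psd Matrix.PosSemidef.one hb'.1) hc'.2)
      (kron_psd (kron_psd Matrix.PosSemidef.one hb'.2) hc'.1)
      (kron_psd (kron_psd Matrix.PosSemidef.one hb'.1) hc'.1)
      (kron_psd (kron_psd Matrix.PosSemidef.one hb'.2) hc'.2)
      ?_ ?_
    · simp only [sub_kron, kron_sub, Matrix.add_kronecker, Matrix.kronecker_add,
        Matrix.one_kronecker_one]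
      abel
    · simp only [sub_kron, kron_sub, Matrix.add_kronecker, Matrix.kronecker_add,
        Matrix.one_kronecker_one]
      abel
  have h000 := hcl (A 0) (B 0) (C 0) (hA 0) (hB 0) (hC 0) (hAn 0) (hBn 0) (hCn 0)
  have h100 := hcl (A 1) (B 0) (C 0) (hA 1) (hB 0) (hC 0) (hAn 1) (hBn 0) (hCn 0)
  have h010 := hcl (A 0) (B 1) (C 0) (hA 0) (hB 1) (hC 0) (hAn 0) (hBn 1) (hCn 0)
  have h001 := hcl (A 0) (B 0) (C 1) (hA 0) (hB 0) (hC 1) (hAn 0) (hBn 0) (hCn 1)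
  have h011 := hcl (A 0) (B 1) (C 1) (hA 0) (hB 1) (hC 1) (hAn 0) (hBn 1) (hCn 1)
  have h110 := hcl (A 1) (B 1) (C 0) (hA 1) (hB 1) (hC 0) (hAn 1) (hBn 1) (hCn 0)
  have h101 := hcl (A 1) (B 0) (C 1) (hA 1) (hB 0) (hC 1) (hAn 1) (hBn 0) (hCn 1)
  have h111 := hcl (A 1) (B 1) (C 1) (hA 1) (hB 1) (hC 1) (hAn 1) (hBn 1) (hCn 1)
  set a0 := (((A 0 ⊗ₖ (1 : Matrix dB dB ℂ) ⊗ₖ (1 : Matrix dC dC ℂ)) * ρ).trace).re with ha0d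
  set a1 := (((A 1 ⊗ₖ (1 : Matrix dB dB ℂ) ⊗ₖ (1 : Matrix dC dC ℂ)) * ρ).trace).re with ha1d
  set b00 := ((((1 : Matrix dA dA ℂ) ⊗ₖ B 0 ⊗ₖ C 0) * ρ).trace).re with hb00d
  set b10 := ((((1 : Matrix dA dA ℂ) ⊗ₖ B 1 ⊗ₖ C 0) * ρ).trace).re with hb10d
  set b01 := ((((1 : Matrix dA dA ℂ) ⊗ₖ B 0 ⊗ₖ C 1) * ρ).trace).re with hb01d
  set b11 := ((((1 : Matrix dA dA ℂ) ⊗ₖ B 1 ⊗ₖ C 1) * ρ).trace).re with hb11d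
  have ha0 := ha 0; have ha1 := ha 1
  have hb00 := hb 0 0; have hb10 := hb 1 0; have hb01 := hb 0 1; have hb11 := hb 1 1
  rw [abs_le] at h000 h100 h010 h001 h011 h110 h101 h111 ha0 ha1 hb00 hb10 hb01 hb11
  have t1 : a0 * (b00 + b10 + b01 - b11) ≤ |b00 + b10 + b01 - b11| := by
    calc a0 * (b00 + b10 + b01 - b11) ≤ |a0 * (b00 + b10 + b01 - b11)| := le_abs_self _
      _ = |a0| * |b00 + b10 + b01 - b11| := abs_mul _ _
      _ ≤ 1 * |b00 + b10 + b01 - b11| := by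
          refine mul_le_mul_of_nonneg_right ?_ (abs_nonneg _)
          rw [abs_le]; exact ha0
      _ = _ := one_mul _
  have t2 : a1 * (b00 - b10 - b01 - b11) ≤ |b00 - b10 - b01 - b11| := by
    calc a1 * (b00 - b10 - b01 - b11) ≤ |a1 * (b00 - b10 - b01 - b11)| := le_abs_self _
      _ = |a1| * |b00 - b10 - b01 - b11| := abs_mul _ _
      _ ≤ 1 * |b00 - b10 - b01 - b11| := by
          refine mul_le_mul_of_nonneg_right ?_ (abs_nonneg _)
          rw [abs_le]; exact ha1
      _ = _ := one_mul _
  have t3 : |b00 + b10 + b01 - b11| + |b00 - b10 - b01 - b11| ≤ 4 := by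
    rcases abs_cases (b00 + b10 + b01 - b11) with ⟨h1, _⟩ | ⟨h1, _⟩ <;>
      rcases abs_cases (b00 - b10 - b01 - b11) with ⟨h2, _⟩ | ⟨h2, _⟩ <;>
      linarith [hb00.1, hb00.2, hb10.1, hb10.2, hb01.1, hb01.2, hb11.1, hb11.2]
  have e1 : a0 * (b00 + b10 + b01 - b11) =
      a0 * b00 + a0 * b10 + a0 * b01 - a0 * b11 := by ring
  have e2 : a1 * (b00 - b10 - b01 - b11) =
      a1 * b00 - a1 * b10 - a1 * b01 - a1 * b11 := by ring
  linarith [h000.2, h100.2, h010.2, h001.2, h011.1, h110.1, h101.1, h111.1]
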